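/- Let G be a finite simple graph on n vertices with maximum degree Δ ≥ 1, and let s be a positive integer. Then the number of vertex subsets S of G with |S| = s such that the induced subgraph G[S] is connected is at most n·(e·Δ)^s, where e is Euler's number. -/

import Mathlib

namespace Stmt10
open Finset List

set_option linter.unusedSectionVars false
variable {V : Type*} [Fintype V] [DecidableEq V] (G : SimpleGraph V) [DecidableRel G.Adj]

/-- list of neighbors of `u`, in an arbitrary but fixed order. -/
noncomputable def nbrList (u : V) : List V := (G.neighborFinset u).toList

/-- index of a neighbor. -/
noncomputable def eta (u w : V) : ℕ := (nbrList G u).idxOf w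

/-- vertex with a given neighbor index. -/
noncomputable def etaInv (v₀ u : V) (k : ℕ) : V := (nbrList G u).getD k v₀

lemma etaInv_eta {u w : V} (h : w ∈ G.neighborFinset u) (v₀ : V) :
    etaInv G v₀ u (eta G u w) = w := by
  have hw : w ∈ nbrList G u := Finset.mem_toList.2 h
  have hlt : (nbrList G u).idxOf w < (nbrList G u).length :=
    List.idxOf_lt_length_iff.2 hw
  rw [etaInv, eta, List.getD_eq_getElem _ _ hlt]
  exact List.getElem_idxOf hlt

lemma eta_lt_maxDegree {u w : V} (h : w ∈ G.neighborFinset u) :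
    eta G u w < G.maxDegree := by
  have hw : w ∈ nbrList G u := Finset.mem_toList.2 h
  have hlt : (nbrList G u).idxOf w < (nbrList G u).length :=
    List.idxOf_lt_length_iff.2 hw
  have hlen : (nbrList G u).length = G.degree u := by
    rw [nbrList, Finset.length_toList]; rfl
  exact lt_of_lt_of_le (by simpa [eta, hlen] using hlt) (G.degree_le_maxDegree u)

/-- decode a chunk of children from a set of neighbor indices. -/
noncomputable def chunk (v₀ u : V) (A : Finset ℕ) : List V := (A.sort (· ≤ ·)).map (etaInv G v₀ u)

lemma chunk_length (v₀ u : V) (A : Finset ℕ) : (chunk G v₀ u A).length = A.card := by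
  simp [chunk]

lemma chunk_image {u : V} {K : Finset V} (hK : K ⊆ G.neighborFinset u) (v₀ : V) :
    (chunk G v₀ u (K.image (eta G u))).toFinset = K ∧
      (chunk G v₀ u (K.image (eta G u))).Nodup ∧
      (chunk G v₀ u (K.image (eta G u))).length = K.card := by
  have hinv : ∀ w ∈ K, etaInv G v₀ u (eta G u w) = w := fun w hw =>
    etaInv_eta G (hK hw) v₀
  constructor
  · ext x
    simp only [chunk, List.mem_toFinset, List.mem_map, Finset.mem_sort, Finset.mem_image]
    constructor
    · rintro ⟨k, ⟨w, hw, rfl⟩, rfl⟩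
      rw [hinv w hw]; exact hw
    · intro hx
      exact ⟨eta G u x, ⟨x, hx, rfl⟩, hinv x hx⟩
  refine ⟨?_, ?_⟩
  · refine (Finset.sort_nodup _ _).map_on ?_
    intro k₁ hk₁ k₂ hk₂ he
    rw [Finset.mem_sort, Finset.mem_image] at hk₁ hk₂
    obtain ⟨w₁, hw₁, rfl⟩ := hk₁
    obtain ⟨w₂, hw₂, rfl⟩ := hk₂
    rw [hinv w₁ hw₁, hinv w₂ hw₂] at he
    rw [he]
  · rw [chunk_length]
    apply Finset.card_image_of_injOn
    intro w₁ hw₁ w₂ hw₂ he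
    have := hinv w₁ hw₁
    rw [he, hinv w₂ hw₂] at this
    exact this.symm

/-- generic decoder: builds a list of vertices from a root and child-index data. -/
noncomputable def build (v₀ v : V) (A : ℕ → Finset ℕ) : ℕ → List V :=
  Nat.rec [v] (fun i L => L ++ chunk G v₀ (L.getD i v₀) (A i))

@[simp] lemma build_zero (v₀ v : V) (A : ℕ → Finset ℕ) : build G v₀ v A 0 = [v] := rfl

lemma build_succ (v₀ v : V) (A : ℕ → Finset ℕ) (i : ℕ) :
    build G v₀ v A (i+1) =
      build G v₀ v A i ++ chunk G v₀ ((build G v₀ v A i).getD i v₀) (A i) := rfl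

lemma build_congr (v₀ v : V) (A A' : ℕ → Finset ℕ) :
    ∀ m, (∀ i < m, A i = A' i) → build G v₀ v A m = build G v₀ v A' m
  | 0, _ => rfl
  | m+1, h => by
    have ih := build_congr v₀ v A A' m (fun i hi => h i (Nat.lt_succ_of_lt hi))
    rw [build_succ, build_succ, ih, h m (Nat.lt_succ_self m)]

/-- the new vertices discovered at step `i` of the BFS of `S`. -/
def kids (v₀ : V) (S : Finset V) (L : List V) (i : ℕ) : Finset V :=
  if i < L.length then (G.neighborFinset (L.getD i v₀) ∩ S) \ L.toFinset else ∅

/-- the BFS list of `S` starting at `v`. -/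
noncomputable def BL (v₀ v : V) (S : Finset V) : ℕ → List V :=
  Nat.rec [v] (fun i L =>
    L ++ chunk G v₀ (L.getD i v₀) ((kids G v₀ S L i).image (eta G (L.getD i v₀))))

@[simp] lemma BL_zero (v₀ v : V) (S : Finset V) : BL G v₀ v S 0 = [v] := rfl

lemma BL_succ (v₀ v : V) (S : Finset V) (i : ℕ) :
    BL G v₀ v S (i+1) =
      BL G v₀ v S i ++ chunk G v₀ ((BL G v₀ v S i).getD i v₀)
        ((kids G v₀ S (BL G v₀ v S i) i).image (eta G ((BL G v₀ v S i).getD i v₀))) := rfl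

/-- the encoded child-index data of the BFS of `S`. -/
noncomputable def AB (v₀ v : V) (S : Finset V) (i : ℕ) : Finset ℕ :=
  (kids G v₀ S (BL G v₀ v S i) i).image (eta G ((BL G v₀ v S i).getD i v₀))

lemma build_AB (v₀ v : V) (S : Finset V) : ∀ i, build G v₀ v (AB G v₀ v S) i = BL G v₀ v S i
  | 0 => rfl
  | i+1 => by
    have ih := build_AB v₀ v S i
    rw [build_succ, BL_succ, ih, AB]

lemma kids_subset_nbr (v₀ : V) (S : Finset V) (L : List V) (i : ℕ) :
    kids G v₀ S L i ⊆ G.neighborFinset (L.getD i v₀) := by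
  unfold kids
  split
  · intro x hx
    simp only [Finset.mem_sdiff, Finset.mem_inter] at hx
    exact hx.1.1
  · simp

lemma BL_prefix (v₀ v : V) (S : Finset V) (i : ℕ) :
    BL G v₀ v S i <+: BL G v₀ v S (i+1) := by
  rw [BL_succ]; exact List.prefix_append _ _

lemma BL_prefix_le (v₀ v : V) (S : Finset V) {i j : ℕ} (h : i ≤ j) :
    BL G v₀ v S i <+: BL G v₀ v S j := by
  induction j with
  | zero => rw [Nat.le_zero.1 h]
  | succ j ih =>
    rcases Nat.lt_succ_iff_lt_or_eq.1 (Nat.lt_succ_of_le h) with h' | h'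
    · exact (ih (Nat.lt_succ_iff.1 h')).trans (BL_prefix G v₀ v S j)
    · rw [h']

lemma BL_invariant (v₀ v : V) (S : Finset V) (hv : v ∈ S) :
    ∀ i, (BL G v₀ v S i).Nodup ∧ (BL G v₀ v S i).toFinset ⊆ S
  | 0 => by simp [hv]
  | i+1 => by
    obtain ⟨hnd, hsub⟩ := BL_invariant v₀ v S hv i
    set L := BL G v₀ v S i with hL
    set u := L.getD i v₀
    have hK := kids_subset_nbr G v₀ S L i
    obtain ⟨hto, hnd', _⟩ := chunk_image G hK v₀
    constructor
    · rw [BL_succ, ← hL, List.nodup_append]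
      refine ⟨hnd, hnd', ?_⟩
      rintro x hx _ hxc rfl
      have hxK : x ∈ kids G v₀ S L i := by
        rw [← hto]; exact List.mem_toFinset.2 hxc
      unfold kids at hxK
      by_cases hi : i < L.length
      · rw [if_pos hi] at hxK
        exact (Finset.mem_sdiff.1 hxK).2 (List.mem_toFinset.2 hx)
      · rw [if_neg hi] at hxK; exact absurd hxK (Finset.notMem_empty _)
    · rw [BL_succ, ← hL]
      intro x hx
      rw [List.toFinset_append, Finset.mem_union] at hx
      rcases hx with hx | hx
      · exact hsub hx
      · have hxK : x ∈ kids G v₀ S L i := by rw [← hto]; exact hx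
        unfold kids at hxK
        by_cases hi : i < L.length
        · rw [if_pos hi] at hxK
          exact (Finset.mem_inter.1 (Finset.mem_sdiff.1 hxK).1).2
        · rw [if_neg hi] at hxK; exact absurd hxK (Finset.notMem_empty _)

lemma BL_length_le (v₀ v : V) (S : Finset V) (hv : v ∈ S) (i : ℕ) :
    (BL G v₀ v S i).length ≤ S.card := by
  obtain ⟨hnd, hsub⟩ := BL_invariant G v₀ v S hv i
  calc (BL G v₀ v S i).length = (BL G v₀ v S i).toFinset.card :=
        (List.toFinset_card_of_nodup hnd).symm
    _ ≤ S.card := Finset.card_le_card hsub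

lemma BL_stab (v₀ v : V) (S : Finset V) {i : ℕ} (h : (BL G v₀ v S i).length ≤ i) :
    ∀ j, i ≤ j → BL G v₀ v S j = BL G v₀ v S i := by
  intro j hj
  induction j with
  | zero => rw [Nat.le_zero.1 hj]
  | succ j ih =>
    rcases Nat.lt_succ_iff_lt_or_eq.1 (Nat.lt_succ_of_le hj) with h' | h'
    · have hij : i ≤ j := Nat.lt_succ_iff.1 h' 
      have heq := ih hij
      have hlen : ¬ j < (BL G v₀ v S i).length := by omega
      rw [BL_succ, heq]
      unfold kids
      rw [if_neg hlen]
      simp [chunk]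
    · rw [h']

lemma BL_processed (v₀ v : V) (S : Finset V) {p m : ℕ} (hpm : p ≤ m)
    (hp : p < (BL G v₀ v S m).length) : p < (BL G v₀ v S p).length := by
  by_contra hc
  push_neg at hc
  have := BL_stab G v₀ v S hc m hpm
  rw [this] at hp
  omega

lemma BL_closure (v₀ v : V) (S : Finset V) (hv : v ∈ S) {s : ℕ}
    (hcard : S.card ≤ s) {w : V} (hw : w ∈ (BL G v₀ v S s).toFinset) :
    G.neighborFinset w ∩ S ⊆ (BL G v₀ v S s).toFinset := by
  rw [List.mem_toFinset] at hw
  obtain ⟨p, hp, hget⟩ := List.mem_iff_getElem.1 hw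
  have hps : p < s := lt_of_lt_of_le hp (le_trans (BL_length_le G v₀ v S hv s) hcard)
  have hpp : p < (BL G v₀ v S p).length := BL_processed G v₀ v S (le_of_lt hps) hp
  have hgetp : (BL G v₀ v S p).getD p v₀ = w := by
    have hpre := BL_prefix_le G v₀ v S (le_of_lt hps)
    rw [List.getD_eq_getElem _ _ hpp, ← hget]
    exact List.IsPrefix.getElem hpre hpp
  -- at step p, all new neighbors of w in S get added
  intro x hx
  have hsub1 : (BL G v₀ v S (p+1)).toFinset ⊆ (BL G v₀ v S s).toFinset := fun y hy => by
    rw [List.mem_toFinset] at hy ⊢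
    exact (BL_prefix_le G v₀ v S hps).subset hy
  apply hsub1
  set L := BL G v₀ v S p with hL
  have hK := kids_subset_nbr G v₀ S L p
  obtain ⟨hto, _, _⟩ := chunk_image G hK v₀
  rw [BL_succ, ← hL, List.toFinset_append, Finset.mem_union]
  by_cases hxL : x ∈ L.toFinset
  · exact Or.inl hxL
  · right
    rw [hto]
    unfold kids
    rw [if_pos hpp]
    rw [Finset.mem_sdiff, Finset.mem_inter]
    rw [hgetp]  -- getD of L
    exact ⟨⟨(Finset.mem_inter.1 hx).1, (Finset.mem_inter.1 hx).2⟩, hxL⟩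

lemma BL_coverage (v₀ v : V) (S : Finset V) (hv : v ∈ S) {s : ℕ}
    (hcard : S.card ≤ s) (hconn : (SimpleGraph.induce (↑S : Set V) G).Connected) :
    ∀ w ∈ S, w ∈ (BL G v₀ v S s).toFinset := by
  have hvT : v ∈ (BL G v₀ v S s).toFinset := by
    rw [List.mem_toFinset]
    exact (BL_prefix_le G v₀ v S (Nat.zero_le s)).subset (by simp)
  intro w hw
  have hreach : (SimpleGraph.induce (↑S : Set V) G).Reachable
      ⟨v, by exact hv⟩ ⟨w, by exact hw⟩ := hconn.preconnected _ _
  obtain ⟨pwalk⟩ := hreach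
  -- induct along the walk
  have key : ∀ (x y : (↑S : Set V)) (_ : (SimpleGraph.induce (↑S : Set V) G).Walk x y),
      (x : V) ∈ (BL G v₀ v S s).toFinset → (y : V) ∈ (BL G v₀ v S s).toFinset := by
    intro x y q
    induction q with
    | nil => exact id
    | @cons a b c hadj q ih =>
      intro hx
      apply ih
      have hadj' : G.Adj (a : V) (b : V) := hadj
      have hbm : (b : V) ∈ G.neighborFinset (a : V) ∩ S := by
        rw [Finset.mem_inter, SimpleGraph.mem_neighborFinset]
        exact ⟨hadj', b.2⟩
      exact BL_closure G v₀ v S hv hcard hx hbm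
  exact key _ _ pwalk hvT

lemma BL_toFinset (v₀ v : V) (S : Finset V) (hv : v ∈ S) {s : ℕ}
    (hcard : S.card ≤ s) (hconn : (SimpleGraph.induce (↑S : Set V) G).Connected) :
    (BL G v₀ v S s).toFinset = S :=
  Finset.Subset.antisymm (BL_invariant G v₀ v S hv s).2
    (fun w hw => BL_coverage G v₀ v S hv hcard hconn w hw)

lemma BL_length_eq (v₀ v : V) (S : Finset V) (i : ℕ) :
    (BL G v₀ v S i).length = 1 + ∑ j ∈ Finset.range i, (AB G v₀ v S j).card := by
  induction i with
  | zero => simp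
  | succ i ih =>
    rw [BL_succ, List.length_append, ih, chunk_length, Finset.sum_range_succ, AB]
    ring

lemma AB_subset_range (v₀ v : V) (S : Finset V) (i : ℕ) :
    AB G v₀ v S i ⊆ Finset.range G.maxDegree := by
  intro k hk
  rw [AB, Finset.mem_image] at hk
  obtain ⟨w, hw, rfl⟩ := hk
  rw [Finset.mem_range]
  exact eta_lt_maxDegree G (kids_subset_nbr G v₀ S _ i hw)

end Stmt10

open Stmt10 Finset in
/-- The number of vertex subsets `S` of size `s` inducing a connected subgraph of a graph `G`
on `n` vertices with maximum degree `Δ ≥ 1` is at most `n (eΔ)^s`. -/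
theorem stmt10 {V : Type*} [Fintype V] [DecidableEq V] (G : SimpleGraph V)
    [DecidableRel G.Adj] (n s : ℕ) (hn : Fintype.card V = n)
    (hΔ : 1 ≤ G.maxDegree) (hs : 0 < s) :
    (Nat.card {S : Finset V // S.card = s ∧
        (SimpleGraph.induce (↑S : Set V) G).Connected} : ℝ) ≤
      (n : ℝ) * (Real.exp 1 * (G.maxDegree : ℝ)) ^ s := by
  classical
  rcases isEmpty_or_nonempty V with hV | hV
  · haveI : IsEmpty {S : Finset V // S.card = s ∧
        (SimpleGraph.induce (↑S : Set V) G).Connected} := by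
      refine ⟨fun ⟨S, hS, _⟩ => ?_⟩
      obtain ⟨x, -⟩ := Finset.card_pos.1 (hS ▸ hs)
      exact hV.false x
    rw [Nat.card_of_isEmpty]
    push_cast
    positivity
  obtain ⟨v₀⟩ := hV
  set Δ := G.maxDegree with hΔdef
  set P : Finset V → Prop := fun S => S.card = s ∧
      (SimpleGraph.induce (↑S : Set V) G).Connected with hP
  have hcard1 : Nat.card {S : Finset V // P S} = (Finset.univ.filter P).card := by
    rw [Nat.card_eq_fintype_card, Fintype.card_subtype]
  set D := (Finset.univ : Finset V) ×ˢ
      ((Finset.range s ×ˢ Finset.range Δ).powersetCard (s-1)) with hD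
  set f : V × Finset (ℕ × ℕ) → Finset V := fun p =>
    (build G v₀ p.1 (fun i => ((p.2.filter (fun q => q.1 = i)).image Prod.snd)) s).toFinset
    with hf
  have hsurj : Set.SurjOn f ↑D ↑(Finset.univ.filter P) := by
    intro S hS
    simp only [Finset.coe_filter, Set.mem_setOf_eq, Finset.mem_univ, true_and] at hS
    obtain ⟨hcardS, hconn⟩ := hS
    obtain ⟨v, hv⟩ := Finset.card_pos.1 (hcardS ▸ hs)
    have hcards : S.card ≤ s := le_of_eq hcardS
    set F := (Finset.range s).biUnion
        (fun i => (AB G v₀ v S i).image (fun k => (i, k))) with hF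
    have hmemF : ∀ q : ℕ × ℕ, q ∈ F ↔ q.1 < s ∧ q.2 ∈ AB G v₀ v S q.1 := by
      intro q
      simp only [hF, Finset.mem_biUnion, Finset.mem_range, Finset.mem_image, Prod.ext_iff]
      constructor
      · rintro ⟨i, hi, k, hk, h1, h2⟩
        exact ⟨h1 ▸ hi, by rw [← h1, ← h2]; exact hk⟩
      · rintro ⟨h1, h2⟩
        exact ⟨q.1, h1, q.2, h2, rfl, rfl⟩
    have hrecov : ∀ i < s,
        ((F.filter (fun q => q.1 = i)).image Prod.snd) = AB G v₀ v S i := by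
      intro i hi
      ext k
      simp only [Finset.mem_image, Finset.mem_filter]
      constructor
      · rintro ⟨q, ⟨hq, hq1⟩, rfl⟩
        rw [hmemF] at hq
        exact hq1 ▸ hq.2
      · intro hk
        exact ⟨(i, k), ⟨(hmemF (i,k)).2 ⟨hi, hk⟩, rfl⟩, rfl⟩
    -- length of the BFS list
    have hBLfin : (BL G v₀ v S s).toFinset = S := BL_toFinset G v₀ v S hv hcards hconn
    have hBLlen : (BL G v₀ v S s).length = s := by
      rw [← List.toFinset_card_of_nodup (BL_invariant G v₀ v S hv s).1, hBLfin, hcardS]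
    have hsum : ∑ j ∈ Finset.range s, (AB G v₀ v S j).card = s - 1 := by
      have := BL_length_eq G v₀ v S s
      omega
    have hFcard : F.card = s - 1 := by
      rw [hF, Finset.card_biUnion]
      · rw [← hsum]
        refine Finset.sum_congr rfl fun i _ => ?_
        exact Finset.card_image_of_injective _ (fun a b hab => (Prod.ext_iff.1 hab).2)
      · intro i _ j _ hij
        simp only [Finset.disjoint_left, Finset.mem_image]
        rintro q ⟨k, -, rfl⟩ ⟨k', -, h⟩
        exact hij ((Prod.ext_iff.1 h).1.symm)
    have hFsub : F ⊆ Finset.range s ×ˢ Finset.range Δ := by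
      intro q hq
      rw [hmemF] at hq
      rw [Finset.mem_product, Finset.mem_range, Finset.mem_range]
      exact ⟨hq.1, Finset.mem_range.1 (AB_subset_range G v₀ v S q.1 hq.2)⟩
    refine ⟨(v, F), ?_, ?_⟩
    · simp only [hD, Finset.coe_product, Set.mem_prod, Finset.mem_coe, Finset.mem_univ,
        true_and, Finset.mem_powersetCard]
      exact ⟨hFsub, hFcard⟩
    · simp only [hf]
      rw [build_congr G v₀ v _ (AB G v₀ v S) s hrecov, build_AB, hBLfin]
  have hle : (Finset.univ.filter P).card ≤ D.card :=
    Finset.card_le_card_of_surjOn f hsurj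
  have hDcard : D.card = n * Nat.choose (s * Δ) (s - 1) := by
    rw [hD, Finset.card_product, Finset.card_univ, hn, Finset.card_powersetCard,
      Finset.card_product, Finset.card_range, Finset.card_range]
  -- the analytic estimate
  have hΔ1 : (1 : ℝ) ≤ (Δ : ℝ) := by exact_mod_cast hΔ
  have hchoose : ((Nat.choose (s * Δ) (s - 1) : ℕ) : ℝ) ≤ (Real.exp 1 * (Δ : ℝ)) ^ s := by
    have h1 : ((Nat.choose (s * Δ) (s - 1) : ℕ) : ℝ) ≤
        ((s * Δ : ℕ) : ℝ) ^ (s - 1) / (Nat.factorial (s - 1)) :=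
      Nat.choose_le_pow_div (s - 1) (s * Δ)
    have h2 : (s : ℝ) ^ (s - 1) / (Nat.factorial (s - 1)) ≤ Real.exp s :=
      Real.pow_div_factorial_le_exp (x := (s : ℝ)) (Nat.cast_nonneg s) (s - 1)
    have h3 : ((s * Δ : ℕ) : ℝ) ^ (s - 1) / (Nat.factorial (s - 1)) =
        (Δ : ℝ) ^ (s - 1) * ((s : ℝ) ^ (s - 1) / (Nat.factorial (s - 1))) := by
      push_cast
      rw [mul_pow]
      ring
    have h4 : (Δ : ℝ) ^ (s - 1) ≤ (Δ : ℝ) ^ s :=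
      pow_le_pow_right₀ hΔ1 (Nat.sub_le s 1)
    have h5 : Real.exp s = (Real.exp 1) ^ s := by
      rw [← Real.exp_nat_mul, mul_one]
    calc ((Nat.choose (s * Δ) (s - 1) : ℕ) : ℝ)
        ≤ (Δ : ℝ) ^ (s - 1) * ((s : ℝ) ^ (s - 1) / (Nat.factorial (s - 1))) := by
          rw [← h3]; exact h1
      _ ≤ (Δ : ℝ) ^ s * Real.exp s := by
          apply mul_le_mul h4 h2 (by positivity) (by positivity)
      _ = (Real.exp 1 * (Δ : ℝ)) ^ s := by
          rw [mul_pow, h5]; ring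
  calc (Nat.card {S : Finset V // P S} : ℝ)
      = ((Finset.univ.filter P).card : ℝ) := by rw [hcard1]
    _ ≤ (D.card : ℝ) := by exact_mod_cast hle
    _ = (n : ℝ) * ((Nat.choose (s * Δ) (s - 1) : ℕ) : ℝ) := by
        rw [hDcard]; push_cast; ring
    _ ≤ (n : ℝ) * (Real.exp 1 * (Δ : ℝ)) ^ s := by
        apply mul_le_mul_of_nonneg_left hchoose (by positivity)
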